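/- Let d be a strictly positive probability distribution on a finite set Ω with |Ω| = 2. Then every 2×2 stochastic matrix M with Md = d can be written as M = (1-λ)·I + λ·P for some λ ∈ [0,1], where P is the 2×2 matrix with entries P₁₁ = 1 - d₂/d₁, P₁₂ = 1, P₂₁ = d₂/d₁, P₂₂ = 0 (assuming d₁ ≥ d₂). -/
import Mathlib


open Matrix BigOperators

/-- For `|Ω| = 2`, every `d`-stochastic matrix is a `T^d`-transform,
i.e. a convex combination of the identity and the `d`-swap. -/
theorem stmt0 (d : Fin 2 → ℝ) (hpos : ∀ i, 0 < d i) (hsum : ∑ i, d i = 1)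
    (hord : d 1 ≤ d 0)
    (M : Matrix (Fin 2) (Fin 2) ℝ)
    (hnn : ∀ i j, 0 ≤ M i j) (hcol : ∀ j, ∑ i, M i j = 1)
    (hfix : M.mulVec d = d) :
    ∃ lam : ℝ, lam ∈ Set.Icc (0 : ℝ) 1 ∧
      M = (1 - lam) • (1 : Matrix (Fin 2) (Fin 2) ℝ) +
        lam • !![1 - d 1 / d 0, 1; d 1 / d 0, 0] := by
  have hd0 : 0 < d 0 := hpos 0
  have hc0 := hcol 0
  have hc1 := hcol 1
  simp [Fin.sum_univ_two] at hc0 hc1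
  have hf0 : M 0 0 * d 0 + M 0 1 * d 1 = d 0 := by
    have := congrFun hfix 0
    simpa [Matrix.mulVec, dotProduct, Fin.sum_univ_two] using this
  refine ⟨M 0 1, ⟨hnn 0 1, by linarith [hnn 1 1]⟩, ?_⟩
  ext i j
  fin_cases i <;> fin_cases j <;>
    simp [Matrix.one_apply] <;> (try field_simp) <;> nlinarith [hnn 1 0]
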